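/- Under the edge consistency model, if every update function applied at a vertex v only reads and writes data on v and its incident edges (never modifying data on adjacent vertices), then any parallel execution in which no two adjacent vertices are updated simultaneously is sequentially consistent. -/

import Mathlib

/-- Data locations of a data graph: vertex data and edge data. -/
abbrev Loc (V : Type*) := V ⊕ Sym2 V

/-- The read scope of a vertex `v` under edge consistency: `v`, its neighbors,
and its incident edges. -/
def readScope {V : Type*} (G : SimpleGraph V) (v : V) : Set (Loc V) :=
  {l | match l with
    | Sum.inl u => u = v ∨ G.Adj u v
    | Sum.inr e => v ∈ e ∧ e ∈ G.edgeSet}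

/-- The write set of a vertex `v` under edge consistency: `v` itself and its
incident edges (data on adjacent vertices may not be modified). -/
def writeSet {V : Type*} (G : SimpleGraph V) (v : V) : Set (Loc V) :=
  {l | match l with
    | Sum.inl u => u = v
    | Sum.inr e => v ∈ e ∧ e ∈ G.edgeSet}

/-- One parallel step: all vertices of `S` are updated simultaneously; the state
changes on the write set of each updated vertex and is unchanged elsewhere. -/
def ParStep {V D : Type*} (G : SimpleGraph V) (f : V → (Loc V → D) → (Loc V → D))
    (S : Finset V) (σ σ' : Loc V → D) : Prop :=
  (∀ v ∈ S, ∀ l ∈ writeSet G v, σ' l = f v σ l) ∧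
  (∀ l, (∀ v ∈ S, l ∉ writeSet G v) → σ' l = σ l)

/-- A parallel execution under the edge consistency model: a sequence of parallel
steps, where the simultaneously updated vertices of each step are pairwise
non-adjacent (and distinct). -/
inductive ParExec {V D : Type*} (G : SimpleGraph V)
    (f : V → (Loc V → D) → (Loc V → D)) :
    List (Finset V) → (Loc V → D) → (Loc V → D) → Prop
  | nil (σ : Loc V → D) : ParExec G f [] σ σ
  | cons {S : Finset V} {steps : List (Finset V)} {σ σ₁ σ₂ : Loc V → D} :
      (∀ u ∈ S, ∀ v ∈ S, u ≠ v → ¬ G.Adj u v) →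
      ParStep G f S σ σ₁ → ParExec G f steps σ₁ σ₂ →
      ParExec G f (S :: steps) σ σ₂


lemma writeSet_disjoint_readScope {V : Type*} (G : SimpleGraph V) {u v : V}
    (huv : u ≠ v) (hadj : ¬ G.Adj u v) {l : Loc V} (hl : l ∈ writeSet G u) :
    l ∉ readScope G v := by
  cases l with
  | inl w =>
    simp only [writeSet, Set.mem_setOf_eq] at hl
    subst hl
    simp only [readScope, Set.mem_setOf_eq]
    rintro (h | h)
    · exact huv h
    · exact hadj h
  | inr e =>
    simp only [writeSet, Set.mem_setOf_eq] at hl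
    simp only [readScope, Set.mem_setOf_eq]
    rintro ⟨hv, he⟩
    have : e = s(u, v) := (Sym2.mem_and_mem_iff huv).mp ⟨hl.1, hv⟩
    subst this
    exact hadj (G.mem_edgeSet.mp he)

lemma writeSet_subset_readScope {V : Type*} (G : SimpleGraph V) (v : V) :
    writeSet G v ⊆ readScope G v := by
  intro l hl
  cases l with
  | inl w =>
    simp only [writeSet, Set.mem_setOf_eq] at hl
    simp only [readScope, Set.mem_setOf_eq]
    exact Or.inl hl
  | inr e => exact hl

lemma foldl_indep {V D : Type*} (G : SimpleGraph V) (f : V → (Loc V → D) → (Loc V → D))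
    (hreads : ∀ v (σ σ' : Loc V → D), (∀ l ∈ readScope G v, σ l = σ' l) →
      ∀ l ∈ writeSet G v, f v σ l = f v σ' l)
    (hwrites : ∀ v (σ : Loc V → D) (l : Loc V), l ∉ writeSet G v → f v σ l = σ l)
    (L : List V) (hnd : L.Nodup)
    (hind : ∀ u ∈ L, ∀ v ∈ L, u ≠ v → ¬ G.Adj u v) (σ : Loc V → D) :
    (∀ v ∈ L, ∀ l ∈ writeSet G v, (L.foldl (fun s v => f v s) σ) l = f v σ l) ∧
    (∀ l, (∀ v ∈ L, l ∉ writeSet G v) → (L.foldl (fun s v => f v s) σ) l = σ l) := by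
  induction L generalizing σ with
  | nil => simp
  | cons v L ih =>
    have hnd' : L.Nodup := hnd.of_cons
    have hind' : ∀ u ∈ L, ∀ w ∈ L, u ≠ w → ¬ G.Adj u w := fun u hu w hw =>
      hind u (List.mem_cons_of_mem _ hu) w (List.mem_cons_of_mem _ hw)
    obtain ⟨ha, hb⟩ := ih hnd' hind' (f v σ)
    simp only [List.foldl_cons]
    have hvne : ∀ u ∈ L, v ≠ u := by
      intro u hu h
      exact (List.nodup_cons.mp hnd).1 (h ▸ hu)
    constructor
    · rintro u hu l hl
      rcases List.mem_cons.mp hu with rfl | hu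
      · rw [hb l ?_]
        intro w hw hlw
        exact writeSet_disjoint_readScope G (Ne.symm (hvne w hw))
          (hind w (List.mem_cons_of_mem _ hw) u List.mem_cons_self
            (Ne.symm (hvne w hw))) hlw (writeSet_subset_readScope G u hl)
      · rw [ha u hu l hl]
        refine hreads u _ _ ?_ l hl
        intro l' hl'
        apply hwrites
        intro hlw
        exact writeSet_disjoint_readScope G (hvne u hu)
          (hind v List.mem_cons_self u (List.mem_cons_of_mem _ hu) (hvne u hu))
          hlw hl'
    · intro l hl
      rw [hb l (fun w hw => hl w (List.mem_cons_of_mem _ hw)),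
        hwrites v σ l (hl v List.mem_cons_self)]

lemma parstep_eq_foldl {V D : Type*} (G : SimpleGraph V)
    (f : V → (Loc V → D) → (Loc V → D))
    (hreads : ∀ v (σ σ' : Loc V → D), (∀ l ∈ readScope G v, σ l = σ' l) →
      ∀ l ∈ writeSet G v, f v σ l = f v σ' l)
    (hwrites : ∀ v (σ : Loc V → D) (l : Loc V), l ∉ writeSet G v → f v σ l = σ l)
    {S : Finset V} (hS : ∀ u ∈ S, ∀ v ∈ S, u ≠ v → ¬ G.Adj u v)
    {σ σ₁ : Loc V → D} (hstep : ParStep G f S σ σ₁) :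
    S.toList.foldl (fun s v => f v s) σ = σ₁ := by
  obtain ⟨ha, hb⟩ := foldl_indep G f hreads hwrites S.toList S.nodup_toList
    (by simpa using hS) σ
  funext l
  by_cases h : ∃ v ∈ S, l ∈ writeSet G v
  · obtain ⟨v, hv, hl⟩ := h
    rw [ha v (Finset.mem_toList.mpr hv) l hl]
    exact (hstep.1 v hv l hl).symm
  · push_neg at h
    rw [hb l (fun v hv => h v (Finset.mem_toList.mp hv))]
    exact (hstep.2 l h).symm

/-- Edge consistency implies sequential consistency: if every update function at
`v` reads only data of `v`, its incident edges and its neighbors, and writes only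
data of `v` and its incident edges (never modifying adjacent vertex data), then
any parallel execution in which no two adjacent vertices are updated
simultaneously has an equivalent sequential execution. -/
theorem edge_consistency_sequentially_consistent
    {V D : Type*} (G : SimpleGraph V) (f : V → (Loc V → D) → (Loc V → D))
    (hreads : ∀ v (σ σ' : Loc V → D), (∀ l ∈ readScope G v, σ l = σ' l) →
      ∀ l ∈ writeSet G v, f v σ l = f v σ' l)
    (hwrites : ∀ v (σ : Loc V → D) (l : Loc V), l ∉ writeSet G v → f v σ l = σ l)
    (steps : List (Finset V)) (σ σf : Loc V → D)
    (hexec : ParExec G f steps σ σf) :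
    ∃ L : List V, L.Perm (steps.flatMap Finset.toList) ∧
      L.foldl (fun s v => f v s) σ = σf := by
  induction hexec with
  | nil σ => exact ⟨[], by simp, rfl⟩
  | @cons S steps σ σ₁ σ₂ hS hstep _ ih =>
    obtain ⟨L, hperm, hfold⟩ := ih
    refine ⟨S.toList ++ L, ?_, ?_⟩
    · rw [List.flatMap_cons]
      exact hperm.append_left S.toList
    · rw [List.foldl_append, parstep_eq_foldl G f hreads hwrites hS hstep, hfold]
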